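/- The market is free from statistical arbitrage, i.e. g_0 := sup over admissible policies a of E[G(a)] equals 0, if and only if for every t < m and every instrument i the following two conditions hold P-almost surely (as inequalities in the extended reals, so that they hold trivially where the relevant spread is infinite): (1) the marginal purchase price exceeds the expected gains: H_t^{(t,i)} + γ_t^{+,i} ≥ E[H_T^{(t,i)} | 𝓕_t]; and (2) the marginal sale proceeds do not exceed the expected liability: H_t^{(t,i)} − γ_t^{−,i} ≤ E[H_T^{(t,i)} | 𝓕_t]. -/

import Mathlib

open MeasureTheory ENNReal Real Filter Set

noncomputable section

variable {Ω : Type*}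

/-- A policy: at each time `t < m`, an `F t`-measurable, essentially bounded action in `ℝ^n`. -/
def IsPolicy {mΩ : MeasurableSpace Ω} (P : Measure Ω) (m n : ℕ) (F : ℕ → MeasurableSpace Ω)
    (a : ℕ → Ω → Fin n → ℝ) : Prop :=
  ∀ t < m, Measurable[F t] (a t) ∧ ∃ C : ℝ, ∀ᵐ ω ∂P, ∀ i, |a t ω i| ≤ C

/-- Terminal gain of a policy under proportional costs with possibly infinite spreads
(valued in `[0,∞]`), using the convention `∞ · 0 = 0`. -/
def eGain (m n : ℕ) (Hmid HT : ℕ → Ω → Fin n → ℝ) (γp γm : ℕ → Ω → Fin n → ℝ≥0∞)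
    (a : ℕ → Ω → Fin n → ℝ) (ω : Ω) : ℝ :=
  ∑ t ∈ Finset.range m, ((∑ i, a t ω i * (HT t ω i - Hmid t ω i))
    - ∑ i, ((γp t ω i * ENNReal.ofReal (max (a t ω i) 0)).toReal
        + (γm t ω i * ENNReal.ofReal (max (-a t ω i) 0)).toReal))

/-- Admissibility for proportional costs with possibly infinite spreads: the positive part
of the action vanishes a.s. where the ask spread is infinite, the negative part vanishes a.s.
where the bid spread is infinite, and the terminal gain is integrable. -/
def EAdmissible {mΩ : MeasurableSpace Ω} (P : Measure Ω) (m n : ℕ)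
    (F : ℕ → MeasurableSpace Ω) (Hmid HT : ℕ → Ω → Fin n → ℝ)
    (γp γm : ℕ → Ω → Fin n → ℝ≥0∞) (a : ℕ → Ω → Fin n → ℝ) : Prop :=
  IsPolicy P m n F a ∧
    (∀ t < m, ∀ᵐ ω ∂P, ∀ i, (γp t ω i = ∞ → max (a t ω i) 0 = 0) ∧
      (γm t ω i = ∞ → max (-a t ω i) 0 = 0)) ∧
    Integrable (eGain m n Hmid HT γp γm a) P

/-- The market with proportional costs (possibly infinite spreads) is free
from statistical arbitrage, `g_0 = sup_a E[G(a)] = 0`, if and only if a.s., for each `t < m`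
and each instrument `i`, the ask dominates the expected gain and the bid is dominated by the
expected liability (as extended-real inequalities). -/

lemma ereal_coe_toReal {g : ℝ≥0∞} (hg : g ≠ ⊤) : (g : EReal) = ((g.toReal : ℝ) : EReal) := by
  lift g to NNReal using hg
  rw [EReal.coe_nnreal_eq_coe_real, ENNReal.coe_toReal]

lemma ptwise (x h e : ℝ) (gp gm : ℝ≥0∞)
    (h1 : (e : EReal) ≤ (h : EReal) + (gp : EReal))
    (h2 : (h : EReal) - (gm : EReal) ≤ (e : EReal))
    (hp : gp = ∞ → max x 0 = 0) (hm : gm = ∞ → max (-x) 0 = 0) :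
    x * (e - h) ≤ (gp * ENNReal.ofReal (max x 0)).toReal
      + (gm * ENNReal.ofReal (max (-x) 0)).toReal := by
  rcases le_or_gt x 0 with hx | hx
  · have hx0 : max x 0 = 0 := max_eq_right hx
    rw [hx0, ENNReal.ofReal_zero, mul_zero, ENNReal.toReal_zero, zero_add]
    rcases eq_or_ne gm ∞ with hgm | hgm
    · have h0 := hm hgm
      have hx' : x = 0 := by
        rw [max_eq_left (neg_nonneg.mpr hx)] at h0; linarith
      simp [hx']
    · have h2' : h - gm.toReal ≤ e := by
        rw [ereal_coe_toReal hgm, ← EReal.coe_sub] at h2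
        exact_mod_cast h2
      have hmx : max (-x) 0 = -x := max_eq_left (neg_nonneg.mpr hx)
      rw [hmx, ENNReal.toReal_mul, ENNReal.toReal_ofReal (neg_nonneg.mpr hx)]
      nlinarith [ENNReal.toReal_nonneg (a := gm)]
  · have hgp : gp ≠ ∞ := by
      intro hinf
      have h0 := hp hinf
      rw [max_eq_left hx.le] at h0
      linarith
    have h1' : e ≤ h + gp.toReal := by
      rw [ereal_coe_toReal hgp, ← EReal.coe_add] at h1
      exact_mod_cast h1
    have hmx : max (-x) 0 = 0 := max_eq_right (by linarith)
    rw [hmx, ENNReal.ofReal_zero, mul_zero, ENNReal.toReal_zero, add_zero,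
      max_eq_left hx.le, ENNReal.toReal_mul, ENNReal.toReal_ofReal hx.le]
    nlinarith [ENNReal.toReal_nonneg (a := gp)]


lemma integrable_of_aebdd {mΩ : MeasurableSpace Ω} (P : Measure Ω) [IsFiniteMeasure P]
    {f : Ω → ℝ} (hf : AEStronglyMeasurable f P) {C : ℝ} (h : ∀ᵐ ω ∂P, |f ω| ≤ C) :
    Integrable f P :=
  Integrable.mono' (integrable_const C) hf (by filter_upwards [h] with ω hω; simpa using hω)

lemma key_le {mΩ : MeasurableSpace Ω} (P : Measure Ω) [IsProbabilityMeasure P]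
    (m n : ℕ) (F : ℕ → MeasurableSpace Ω) (hF_le : ∀ t, F t ≤ mΩ)
    (Hmid HT : ℕ → Ω → Fin n → ℝ)
    (hHmid_meas : ∀ t < m, Measurable[F t] (Hmid t))
    (hHT_meas : ∀ t < m, Measurable[F m] (HT t))
    (hHmid_bdd : ∀ t < m, ∃ C : ℝ, ∀ᵐ ω ∂P, ∀ i, |Hmid t ω i| ≤ C)
    (hHT_bdd : ∀ t < m, ∃ C : ℝ, ∀ᵐ ω ∂P, ∀ i, |HT t ω i| ≤ C)
    (γp γm : ℕ → Ω → Fin n → ℝ≥0∞)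
    (hγp_meas : ∀ t < m, Measurable[F t] (γp t)) (hγm_meas : ∀ t < m, Measurable[F t] (γm t))
    (hcond : ∀ t < m, ∀ i : Fin n, ∀ᵐ ω ∂P,
        (((P[fun ω' => HT t ω' i | F t]) ω : EReal) ≤ (Hmid t ω i : EReal) + (γp t ω i : EReal)) ∧
        ((Hmid t ω i : EReal) - (γm t ω i : EReal) ≤ ((P[fun ω' => HT t ω' i | F t]) ω : EReal)))
    (a : ℕ → Ω → Fin n → ℝ) (ha : EAdmissible P m n F Hmid HT γp γm a) :
    ∫ ω, eGain m n Hmid HT γp γm a ω ∂P ≤ 0 := by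
  obtain ⟨hpol, hadm, hint⟩ := ha
  -- names
  set g : ℕ → Ω → ℝ := fun t ω => ∑ i, a t ω i * (HT t ω i - Hmid t ω i) with hg
  set c : ℕ → Ω → ℝ := fun t ω => ∑ i, ((γp t ω i * ENNReal.ofReal (max (a t ω i) 0)).toReal
        + (γm t ω i * ENNReal.ofReal (max (-a t ω i) 0)).toReal) with hc
  have hgain : eGain m n Hmid HT γp γm a = fun ω => ∑ t ∈ Finset.range m, (g t ω - c t ω) := rfl
  -- measurability of components
  have ha_meas : ∀ t < m, ∀ i, Measurable (fun ω => a t ω i) := fun t ht i =>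
    ((measurable_pi_apply i).comp ((hpol t ht).1)).mono (hF_le t) le_rfl
  have hHT_meas' : ∀ t < m, ∀ i, Measurable (fun ω => HT t ω i) := fun t ht i =>
    ((measurable_pi_apply i).comp (hHT_meas t ht)).mono (hF_le m) le_rfl
  have hHmid_meas' : ∀ t < m, ∀ i, Measurable (fun ω => Hmid t ω i) := fun t ht i =>
    ((measurable_pi_apply i).comp (hHmid_meas t ht)).mono (hF_le t) le_rfl
  -- integrability of HT components
  have hHT_int : ∀ t < m, ∀ i, Integrable (fun ω => HT t ω i) P := by
    intro t ht i
    obtain ⟨C, hC⟩ := hHT_bdd t ht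
    exact integrable_of_aebdd P (hHT_meas' t ht i).aestronglyMeasurable
      (by filter_upwards [hC] with ω hω using hω i)
  -- integrability of the per-instrument linear part
  have hgi_int : ∀ t < m, ∀ i, Integrable (fun ω => a t ω i * (HT t ω i - Hmid t ω i)) P := by
    intro t ht i
    obtain ⟨Ca, hCa⟩ := (hpol t ht).2
    obtain ⟨CT, hCT⟩ := hHT_bdd t ht
    obtain ⟨Cm, hCm⟩ := hHmid_bdd t ht
    refine integrable_of_aebdd P ((ha_meas t ht i).mul
      ((hHT_meas' t ht i).sub (hHmid_meas' t ht i))).aestronglyMeasurable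
      (C := |Ca| * (|CT| + |Cm|)) ?_
    filter_upwards [hCa, hCT, hCm] with ω h1 h2 h3
    rw [abs_mul]
    refine mul_le_mul ((h1 i).trans (le_abs_self _)) ?_ (abs_nonneg _) (abs_nonneg _)
    exact (abs_sub _ _).trans (add_le_add ((h2 i).trans (le_abs_self _))
      ((h3 i).trans (le_abs_self _)))
  have hg_int : ∀ t < m, Integrable (g t) P := fun t ht =>
    integrable_finset_sum _ (fun i _ => hgi_int t ht i)
  -- cost components are measurable
  have hcost_meas : ∀ t < m, Measurable (c t) := by
    intro t ht
    apply Finset.measurable_sum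
    intro i _
    have hγp : Measurable (fun ω => γp t ω i) :=
      ((measurable_pi_apply i).comp (hγp_meas t ht)).mono (hF_le t) le_rfl
    have hγm : Measurable (fun ω => γm t ω i) :=
      ((measurable_pi_apply i).comp (hγm_meas t ht)).mono (hF_le t) le_rfl
    apply Measurable.add
    · exact (ENNReal.measurable_toReal.comp (hγp.mul
        (ENNReal.measurable_ofReal.comp ((ha_meas t ht i).max measurable_const))))
    · exact (ENNReal.measurable_toReal.comp (hγm.mul
        (ENNReal.measurable_ofReal.comp ((ha_meas t ht i).neg.max measurable_const))))
  -- cost is nonneg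
  have hcost_nonneg : ∀ t ω, 0 ≤ c t ω := by
    intro t ω
    apply Finset.sum_nonneg
    intro i _
    positivity
  -- total cost integrable
  have hS_int : Integrable (fun ω => ∑ t ∈ Finset.range m, c t ω) P := by
    have : (fun ω => ∑ t ∈ Finset.range m, c t ω)
        = fun ω => (∑ t ∈ Finset.range m, g t ω) - eGain m n Hmid HT γp γm a ω := by
      funext ω
      rw [hgain]
      simp [Finset.sum_sub_distrib]
    rw [this]
    exact (integrable_finset_sum _ (fun t ht => hg_int t (Finset.mem_range.mp ht))).sub hint
  have hc_int : ∀ t < m, Integrable (c t) P := by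
    intro t ht
    refine Integrable.mono' hS_int (hcost_meas t ht).aestronglyMeasurable (ae_of_all _ ?_)
    intro ω
    rw [Real.norm_eq_abs, abs_of_nonneg (hcost_nonneg t ω)]
    exact Finset.single_le_sum (f := fun t => c t ω) (fun s _ => hcost_nonneg s ω)
      (Finset.mem_range.mpr ht)
  -- rewrite integral of gain as a sum over t
  rw [hgain]
  rw [integral_finset_sum (f := fun t ω => g t ω - c t ω) _ (fun t ht' =>
    ((hg_int t (Finset.mem_range.mp ht')).sub (hc_int t (Finset.mem_range.mp ht'))))]
  apply Finset.sum_nonpos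
  intro t ht'
  have ht : t < m := Finset.mem_range.mp ht'
  set e : Fin n → Ω → ℝ := fun i => P[fun ω' => HT t ω' i | F t] with he
  have he_int : ∀ i, Integrable (e i) P := fun i => integrable_condExp
  have he_meas : ∀ i, AEStronglyMeasurable (e i) P :=
    fun i => (stronglyMeasurable_condExp.mono (hF_le t)).aestronglyMeasurable
  have hghat_int : ∀ i, Integrable (fun ω => a t ω i * (e i ω - Hmid t ω i)) P := by
    intro i
    obtain ⟨Ca, hCa⟩ := (hpol t ht).2
    obtain ⟨Cm, hCm⟩ := hHmid_bdd t ht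
    refine Integrable.mono' (g := fun ω => |Ca| * (|e i ω| + |Cm|))
      ((((he_int i).abs.add (integrable_const |Cm|)).const_mul _))
      ((ha_meas t ht i).aestronglyMeasurable.mul
        ((he_meas i).sub (hHmid_meas' t ht i).aestronglyMeasurable)) ?_
    filter_upwards [hCa, hCm] with ω h1 h2
    rw [Real.norm_eq_abs, abs_mul]
    refine mul_le_mul ((h1 i).trans (le_abs_self _)) ?_ (abs_nonneg _) ?_
    · exact (abs_sub _ _).trans (add_le_add le_rfl ((h2 i).trans (le_abs_self _)))
    · positivity
  have hmulmid_int : ∀ i, Integrable (fun ω => a t ω i * Hmid t ω i) P := by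
    intro i
    obtain ⟨Ca, hCa⟩ := (hpol t ht).2
    obtain ⟨Cm, hCm⟩ := hHmid_bdd t ht
    refine integrable_of_aebdd P ((ha_meas t ht i).mul
      (hHmid_meas' t ht i)).aestronglyMeasurable (C := |Ca| * |Cm|) ?_
    filter_upwards [hCa, hCm] with ω h1 h2
    rw [abs_mul]
    exact mul_le_mul ((h1 i).trans (le_abs_self _)) ((h2 i).trans (le_abs_self _))
      (abs_nonneg _) (abs_nonneg _)
  have hmulT_int : ∀ i, Integrable (fun ω => a t ω i * HT t ω i) P := by
    intro i
    obtain ⟨Ca, hCa⟩ := (hpol t ht).2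
    obtain ⟨CT, hCT⟩ := hHT_bdd t ht
    refine integrable_of_aebdd P ((ha_meas t ht i).mul
      (hHT_meas' t ht i)).aestronglyMeasurable (C := |Ca| * |CT|) ?_
    filter_upwards [hCa, hCT] with ω h1 h2
    rw [abs_mul]
    exact mul_le_mul ((h1 i).trans (le_abs_self _)) ((h2 i).trans (le_abs_self _))
      (abs_nonneg _) (abs_nonneg _)
  have hmulE_int : ∀ i, Integrable (fun ω => a t ω i * e i ω) P := by
    intro i
    have h1 := hghat_int i
    have h2 := hmulmid_int i
    have : (fun ω => a t ω i * e i ω)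
        = fun ω => (a t ω i * (e i ω - Hmid t ω i)) + a t ω i * Hmid t ω i := by
      funext ω; ring
    rw [this]
    exact h1.add h2
  have hkey : ∫ ω, g t ω ∂P = ∑ i, ∫ ω, a t ω i * (e i ω - Hmid t ω i) ∂P := by
    rw [hg]
    simp only
    rw [integral_finset_sum _ (fun i _ => hgi_int t ht i)]
    refine Finset.sum_congr rfl (fun i _ => ?_)
    have hsm : StronglyMeasurable[F t] (fun ω => a t ω i) :=
      ((measurable_pi_apply i).comp (hpol t ht).1).stronglyMeasurable
    have hce := condExp_mul_of_stronglyMeasurable_left (μ := P) (m := F t) hsm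
      (hmulT_int i) (hHT_int t ht i)
    have h1 : ∫ ω, a t ω i * HT t ω i ∂P = ∫ ω, a t ω i * e i ω ∂P := by
      have hic := integral_condExp (μ := P)
        (f := (fun ω => a t ω i) * (fun ω => HT t ω i)) (hF_le t)
      calc ∫ ω, a t ω i * HT t ω i ∂P
          = ∫ ω, (P[(fun ω => a t ω i) * (fun ω => HT t ω i)|F t]) ω ∂P := by
            rw [hic]; simp [Pi.mul_apply]
        _ = ∫ ω, a t ω i * e i ω ∂P := by
            refine integral_congr_ae (hce.mono fun ω hω => ?_)
            simpa [Pi.mul_apply] using hω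
    have expand1 : (fun ω => a t ω i * (HT t ω i - Hmid t ω i))
        = fun ω => a t ω i * HT t ω i - a t ω i * Hmid t ω i := funext fun ω => by ring
    have expand2 : (fun ω => a t ω i * (e i ω - Hmid t ω i))
        = fun ω => a t ω i * e i ω - a t ω i * Hmid t ω i := funext fun ω => by ring
    rw [expand1, expand2, integral_sub (hmulT_int i) (hmulmid_int i),
      integral_sub (hmulE_int i) (hmulmid_int i), h1]
  have hrw : ∫ ω, (g t ω - c t ω) ∂P
      = ∫ ω, ((∑ i, a t ω i * (e i ω - Hmid t ω i)) - c t ω) ∂P := by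
    rw [integral_sub (hg_int t ht) (hc_int t ht),
      integral_sub (integrable_finset_sum _ fun i _ => hghat_int i) (hc_int t ht), hkey,
      integral_finset_sum _ (fun i _ => hghat_int i)]
  rw [hrw]
  apply integral_nonpos_of_ae
  have hcond_ae : ∀ᵐ ω ∂P, ∀ i : Fin n,
      (((e i) ω : EReal) ≤ (Hmid t ω i : EReal) + (γp t ω i : EReal)) ∧
      ((Hmid t ω i : EReal) - (γm t ω i : EReal) ≤ ((e i) ω : EReal)) :=
    ae_all_iff.mpr (fun i => hcond t ht i)
  filter_upwards [hadm t ht, hcond_ae] with ω h1 h2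
  rw [hc]
  simp only [Pi.zero_apply, sub_nonpos]
  refine Finset.sum_le_sum (fun i _ => ?_)
  exact ptwise (a t ω i) (Hmid t ω i) (e i ω) (γp t ω i) (γm t ω i)
    (h2 i).1 (h2 i).2 (h1 i).1 (h1 i).2


/-- The gain of the single-trade policy `±1_S e_i at time t`. -/
lemma eGain_single (m n : ℕ)
    (Hmid HT : ℕ → Ω → Fin n → ℝ) (γp γm : ℕ → Ω → Fin n → ℝ≥0∞)
    (t : ℕ) (ht : t < m) (i : Fin n) (S : Set Ω) (x : ℝ)
    (b : ℕ → Ω → Fin n → ℝ)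
    (hb : b = fun s ω j => if s = t ∧ j = i then S.indicator (fun _ => x) ω else 0) (ω : Ω) :
    eGain m n Hmid HT γp γm b ω
      = S.indicator (fun ω => x * (HT t ω i - Hmid t ω i)
          - ((γp t ω i * ENNReal.ofReal (max x 0)).toReal
            + (γm t ω i * ENNReal.ofReal (max (-x) 0)).toReal)) ω := by
  have hb0 : ∀ s j, ¬(s = t ∧ j = i) → ∀ ω', b s ω' j = 0 := by
    intro s j h ω'; rw [hb]; exact if_neg h
  rw [eGain, Finset.sum_eq_single_of_mem t (Finset.mem_range.mpr ht)]
  · by_cases hω : ω ∈ S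
    · have hbt : ∀ j, b t ω j = if j = i then x else 0 := by
        intro j
        by_cases hj : j = i
        · rw [hb]; simp [hj, Set.indicator_of_mem hω]
        · rw [hb0 t j (fun h => hj h.2), if_neg hj]
      rw [Set.indicator_of_mem hω]
      rw [Finset.sum_eq_single_of_mem i (Finset.mem_univ i) (fun j _ hj => by
        rw [hbt j, if_neg hj, zero_mul])]
      rw [Finset.sum_eq_single_of_mem i (Finset.mem_univ i) (fun j _ hj => by
        rw [hbt j, if_neg hj]; simp)]
      rw [hbt i, if_pos rfl]
    · have hbt : ∀ j, b t ω j = 0 := by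
        intro j
        by_cases hj : j = i
        · rw [hb]; simp [hj, Set.indicator_of_notMem hω]
        · exact hb0 t j (fun h => hj h.2) ω
      rw [Set.indicator_of_notMem hω]
      simp [hbt]
  · intro s _ hs
    have : ∀ j, b s ω j = 0 := fun j => hb0 s j (fun h => hs h.1) ω
    simp [this]


lemma cond1_of_le {mΩ : MeasurableSpace Ω} (P : Measure Ω) [IsProbabilityMeasure P]
    (m n : ℕ) (F : ℕ → MeasurableSpace Ω) (hF_le : ∀ t, F t ≤ mΩ)
    (Hmid HT : ℕ → Ω → Fin n → ℝ)
    (hHmid_meas : ∀ t < m, Measurable[F t] (Hmid t))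
    (hHT_meas : ∀ t < m, Measurable[F m] (HT t))
    (hHmid_bdd : ∀ t < m, ∃ C : ℝ, ∀ᵐ ω ∂P, ∀ i, |Hmid t ω i| ≤ C)
    (hHT_bdd : ∀ t < m, ∃ C : ℝ, ∀ᵐ ω ∂P, ∀ i, |HT t ω i| ≤ C)
    (γp γm : ℕ → Ω → Fin n → ℝ≥0∞)
    (hγp_meas : ∀ t < m, Measurable[F t] (γp t))
    (hle : ∀ a, EAdmissible P m n F Hmid HT γp γm a →
      ∫ ω, eGain m n Hmid HT γp γm a ω ∂P ≤ 0)
    (t : ℕ) (ht : t < m) (i : Fin n) :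
    ∀ᵐ ω ∂P, ((P[fun ω' => HT t ω' i | F t]) ω : EReal)
      ≤ (Hmid t ω i : EReal) + (γp t ω i : EReal) := by
  set e : Ω → ℝ := P[fun ω' => HT t ω' i | F t] with he
  set A : ℕ → ℕ → Set Ω := fun K q =>
    {ω | γp t ω i ≤ K ∧ Hmid t ω i + (γp t ω i).toReal + 1/(q+1) ≤ e ω} with hA
  have hγpi : Measurable[F t] (fun ω => γp t ω i) :=
    (measurable_pi_apply i).comp (hγp_meas t ht)
  have hHmidi : Measurable[F t] (fun ω => Hmid t ω i) :=
    (measurable_pi_apply i).comp (hHmid_meas t ht)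
  have hA_measF : ∀ K q, MeasurableSet[F t] (A K q) := by
    intro K q
    have h1 : MeasurableSet[F t] {ω | γp t ω i ≤ (K : ℝ≥0∞)} :=
      measurableSet_le hγpi measurable_const
    have h2 : MeasurableSet[F t] {ω | Hmid t ω i + (γp t ω i).toReal + 1/(q+1) ≤ e ω} :=
      measurableSet_le ((hHmidi.add (ENNReal.measurable_toReal.comp hγpi)).add
        measurable_const) stronglyMeasurable_condExp.measurable
    exact h1.inter h2
  by_cases hnull : ∀ K q, P (A K q) = 0
  · rw [ae_iff]
    refine measure_mono_null ?_
      (measure_iUnion_null (fun K : ℕ => measure_iUnion_null (fun q : ℕ => hnull K q)))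
    intro ω hω
    simp only [mem_setOf_eq, not_le] at hω
    have hγ : γp t ω i ≠ ⊤ := by
      intro h
      rw [h] at hω
      exact absurd (le_of_lt hω) (by simp [EReal.add_top_of_ne_bot (EReal.coe_ne_bot (Hmid t ω i))])
    have hγ' : ((γp t ω i : EReal)) = (((γp t ω i).toReal : ℝ) : EReal) := by
      lift (γp t ω i) to NNReal using hγ with g hg
      rw [EReal.coe_nnreal_eq_coe_real, ENNReal.coe_toReal]
    rw [hγ', ← EReal.coe_add, EReal.coe_lt_coe_iff] at hω
    obtain ⟨K, hK⟩ := ENNReal.exists_nat_gt hγ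
    obtain ⟨q, hq⟩ := exists_nat_one_div_lt (sub_pos.mpr hω)
    refine mem_iUnion.mpr ⟨K, mem_iUnion.mpr ⟨q, ⟨hK.le, ?_⟩⟩⟩
    have : (1 : ℝ)/(q+1) < e ω - (Hmid t ω i + (γp t ω i).toReal) := by exact_mod_cast hq
    linarith
  · push_neg at hnull
    obtain ⟨K, q, hpos⟩ := hnull
    exfalso
    set δ : ℝ := 1/(q+1) with hδ
    have hδpos : 0 < δ := by positivity
    set S := A K q with hS
    have hS_measF : MeasurableSet[F t] S := hA_measF K q
    have hS_meas : MeasurableSet S := hF_le t _ hS_measF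
    have hγK : ∀ ω ∈ S, (γp t ω i).toReal ≤ (K : ℝ) := by
      intro ω hω
      have := ENNReal.toReal_mono (by simp) hω.1
      simpa using this
    have hγne : ∀ ω ∈ S, γp t ω i ≠ ⊤ := by
      intro ω hω h
      have := hω.1
      rw [h] at this
      simp at this
    -- the buy-one policy
    set b : ℕ → Ω → Fin n → ℝ := fun s ω j =>
      if s = t ∧ j = i then S.indicator (fun _ => (1:ℝ)) ω else 0 with hb
    -- gain simplification
    have hgain1 : ∀ ω, eGain m n Hmid HT γp γm b ω
        = S.indicator (fun ω => HT t ω i - Hmid t ω i - min (γp t ω i).toReal K) ω := by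
      intro ω
      rw [eGain_single m n Hmid HT γp γm t ht i S 1 b hb ω]
      by_cases hω : ω ∈ S
      · rw [Set.indicator_of_mem hω, Set.indicator_of_mem hω]
        rw [min_eq_left (hγK ω hω)]
        have h1 : max (1:ℝ) 0 = 1 := max_eq_left zero_le_one
        have h2 : max (-(1:ℝ)) 0 = 0 := max_eq_right (by norm_num)
        rw [h1, h2, ENNReal.ofReal_one, ENNReal.ofReal_zero, mul_one, mul_zero,
          ENNReal.toReal_zero, add_zero, one_mul]
      · rw [Set.indicator_of_notMem hω, Set.indicator_of_notMem hω]
    -- integrability pieces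
    obtain ⟨CT, hCT⟩ := hHT_bdd t ht
    obtain ⟨Cm, hCm⟩ := hHmid_bdd t ht
    have hHTi_meas : Measurable (fun ω => HT t ω i) :=
      ((measurable_pi_apply i).comp (hHT_meas t ht)).mono (hF_le m) le_rfl
    have hf_meas : Measurable (fun ω => HT t ω i - Hmid t ω i - min (γp t ω i).toReal K) :=
      (hHTi_meas.sub (hHmidi.mono (hF_le t) le_rfl)).sub
        (((ENNReal.measurable_toReal.comp hγpi).mono (hF_le t) le_rfl).min measurable_const)
    have hf_int : Integrable (fun ω => HT t ω i - Hmid t ω i - min (γp t ω i).toReal K) P := by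
      refine integrable_of_aebdd P hf_meas.aestronglyMeasurable
        (C := |CT| + |Cm| + K) ?_
      filter_upwards [hCT, hCm] with ω h1 h2
      have hmin : |min (γp t ω i).toReal (K:ℝ)| ≤ (K:ℝ) := by
        rw [abs_of_nonneg (le_min ENNReal.toReal_nonneg (by positivity))]
        exact min_le_right _ _
      calc |HT t ω i - Hmid t ω i - min (γp t ω i).toReal K|
          ≤ |HT t ω i - Hmid t ω i| + |min (γp t ω i).toReal (K:ℝ)| := abs_sub _ _
        _ ≤ (|CT| + |Cm|) + K := add_le_add ((abs_sub _ _).trans (add_le_add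
            ((h1 i).trans (le_abs_self _)) ((h2 i).trans (le_abs_self _)))) hmin
    have hgain_int : Integrable (eGain m n Hmid HT γp γm b) P := by
      have : eGain m n Hmid HT γp γm b
          = S.indicator (fun ω => HT t ω i - Hmid t ω i - min (γp t ω i).toReal K) :=
        funext hgain1
      rw [this]
      exact hf_int.indicator hS_meas
    -- admissibility
    have hadm : EAdmissible P m n F Hmid HT γp γm b := by
      refine ⟨?_, ?_, hgain_int⟩
      · intro s hs
        constructor
        · refine (@measurable_pi_iff Ω (Fin n) (fun _ => ℝ) (F s) (fun _ => inferInstance) (b s)).mpr fun j => ?_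
          by_cases hj : s = t ∧ j = i
          · have : (fun ω => b s ω j) = S.indicator (fun _ => (1:ℝ)) := by
              funext ω; rw [hb]; exact if_pos hj
            rw [this, hj.1]
            exact measurable_const.indicator hS_measF
          · have : (fun ω => b s ω j) = fun _ => 0 := by
              funext ω; rw [hb]; exact if_neg hj
            rw [this]
            exact measurable_const
        · refine ⟨1, ae_of_all _ fun ω j => ?_⟩
          simp only [hb]
          by_cases hj : s = t ∧ j = i
          · rw [if_pos hj]
            by_cases hω : ω ∈ S
            · rw [Set.indicator_of_mem hω]; norm_num
            · rw [Set.indicator_of_notMem hω]; norm_num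
          · rw [if_neg hj]; norm_num
      · intro s hs
        refine ae_of_all _ fun ω j => ?_
        by_cases hj : s = t ∧ j = i
        · obtain ⟨rfl, rfl⟩ := hj
          have hbv : b s ω j = S.indicator (fun _ => (1:ℝ)) ω := by
            simp [hb]
          constructor
          · intro hγ
            have hω : ω ∉ S := fun hω => hγne ω hω hγ
            rw [hbv, Set.indicator_of_notMem hω]
            norm_num
          · intro _
            rw [hbv]
            by_cases hω : ω ∈ S
            · rw [Set.indicator_of_mem hω]; norm_num
            · rw [Set.indicator_of_notMem hω]; norm_num
        · have hbv : b s ω j = 0 := by simp only [hb]; exact if_neg hj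
          rw [hbv]
          norm_num
    -- the expected gain is positive
    have hHTi_int : Integrable (fun ω => HT t ω i) P :=
      integrable_of_aebdd P hHTi_meas.aestronglyMeasurable
        (by filter_upwards [hCT] with ω hω using hω i)
    have hrest_meas : Measurable (fun ω => Hmid t ω i + min (γp t ω i).toReal K) :=
      (hHmidi.mono (hF_le t) le_rfl).add
        (((ENNReal.measurable_toReal.comp hγpi).mono (hF_le t) le_rfl).min measurable_const)
    have hrest_int : Integrable (fun ω => Hmid t ω i + min (γp t ω i).toReal K) P := by
      refine integrable_of_aebdd P hrest_meas.aestronglyMeasurable (C := |Cm| + K) ?_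
      filter_upwards [hCm] with ω h2
      have hmin : |min (γp t ω i).toReal (K:ℝ)| ≤ (K:ℝ) := by
        rw [abs_of_nonneg (le_min ENNReal.toReal_nonneg (by positivity))]
        exact min_le_right _ _
      exact (abs_add_le _ _).trans (add_le_add ((h2 i).trans (le_abs_self _)) hmin)
    have hpos_int : 0 < ∫ ω, eGain m n Hmid HT γp γm b ω ∂P := by
      have h1 : ∫ ω, eGain m n Hmid HT γp γm b ω ∂P
          = ∫ ω in S, (HT t ω i - (Hmid t ω i + min (γp t ω i).toReal K)) ∂P := by
        rw [show (fun ω => eGain m n Hmid HT γp γm b ω)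
            = S.indicator (fun ω => HT t ω i - Hmid t ω i - min (γp t ω i).toReal K) from
          funext hgain1, integral_indicator hS_meas]
        congr 1
        funext ω
        ring
      have h2 : ∫ ω in S, (HT t ω i - (Hmid t ω i + min (γp t ω i).toReal K)) ∂P
          = ∫ ω in S, (e ω - (Hmid t ω i + min (γp t ω i).toReal K)) ∂P := by
        rw [integral_sub hHTi_int.integrableOn hrest_int.integrableOn,
          integral_sub integrable_condExp.integrableOn hrest_int.integrableOn,
          setIntegral_condExp (hF_le t) hHTi_int hS_measF]
      have h3 : δ * (P S).toReal ≤ ∫ ω in S, (e ω - (Hmid t ω i + min (γp t ω i).toReal K)) ∂P := by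
        refine setIntegral_ge_of_const_le_real hS_meas (measure_ne_top P S) (fun ω hω => ?_)
          (integrable_condExp.sub hrest_int).integrableOn
        have h4 := hω.2
        rw [min_eq_left (hγK ω hω)]
        linarith [h4]
      have h5 : 0 < δ * (P S).toReal :=
        mul_pos hδpos (ENNReal.toReal_pos (by simpa using hpos) (measure_ne_top P S))
      rw [h1, h2]
      linarith
    linarith [hle b hadm, hpos_int]

lemma cond2_of_le {mΩ : MeasurableSpace Ω} (P : Measure Ω) [IsProbabilityMeasure P]
    (m n : ℕ) (F : ℕ → MeasurableSpace Ω) (hF_le : ∀ t, F t ≤ mΩ)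
    (Hmid HT : ℕ → Ω → Fin n → ℝ)
    (hHmid_meas : ∀ t < m, Measurable[F t] (Hmid t))
    (hHT_meas : ∀ t < m, Measurable[F m] (HT t))
    (hHmid_bdd : ∀ t < m, ∃ C : ℝ, ∀ᵐ ω ∂P, ∀ i, |Hmid t ω i| ≤ C)
    (hHT_bdd : ∀ t < m, ∃ C : ℝ, ∀ᵐ ω ∂P, ∀ i, |HT t ω i| ≤ C)
    (γp γm : ℕ → Ω → Fin n → ℝ≥0∞)
    (hγm_meas : ∀ t < m, Measurable[F t] (γm t))
    (hle : ∀ a, EAdmissible P m n F Hmid HT γp γm a →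
      ∫ ω, eGain m n Hmid HT γp γm a ω ∂P ≤ 0)
    (t : ℕ) (ht : t < m) (i : Fin n) :
    ∀ᵐ ω ∂P, (Hmid t ω i : EReal) - (γm t ω i : EReal)
      ≤ ((P[fun ω' => HT t ω' i | F t]) ω : EReal) := by
  set e : Ω → ℝ := P[fun ω' => HT t ω' i | F t] with he
  set A : ℕ → ℕ → Set Ω := fun K q =>
    {ω | γm t ω i ≤ K ∧ e ω ≤ Hmid t ω i - (γm t ω i).toReal - 1/(q+1)} with hA
  have hγmi : Measurable[F t] (fun ω => γm t ω i) :=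
    (measurable_pi_apply i).comp (hγm_meas t ht)
  have hHmidi : Measurable[F t] (fun ω => Hmid t ω i) :=
    (measurable_pi_apply i).comp (hHmid_meas t ht)
  have hA_measF : ∀ K q, MeasurableSet[F t] (A K q) := by
    intro K q
    have h1 : MeasurableSet[F t] {ω | γm t ω i ≤ (K : ℝ≥0∞)} :=
      measurableSet_le hγmi measurable_const
    have h2 : MeasurableSet[F t] {ω | e ω ≤ Hmid t ω i - (γm t ω i).toReal - 1/(q+1)} :=
      measurableSet_le stronglyMeasurable_condExp.measurable
        ((hHmidi.sub (ENNReal.measurable_toReal.comp hγmi)).sub measurable_const)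
    exact h1.inter h2
  by_cases hnull : ∀ K q, P (A K q) = 0
  · rw [ae_iff]
    refine measure_mono_null ?_
      (measure_iUnion_null (fun K : ℕ => measure_iUnion_null (fun q : ℕ => hnull K q)))
    intro ω hω
    simp only [mem_setOf_eq, not_le] at hω
    have hγ : γm t ω i ≠ ⊤ := by
      intro h
      rw [h] at hω
      simp only [EReal.coe_ennreal_top, EReal.sub_top] at hω
      exact absurd hω (not_lt.mpr bot_le)
    have hγ' : ((γm t ω i : EReal)) = (((γm t ω i).toReal : ℝ) : EReal) := by
      lift (γm t ω i) to NNReal using hγ with g hg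
      rw [EReal.coe_nnreal_eq_coe_real, ENNReal.coe_toReal]
    rw [hγ', ← EReal.coe_sub, EReal.coe_lt_coe_iff] at hω
    obtain ⟨K, hK⟩ := ENNReal.exists_nat_gt hγ
    obtain ⟨q, hq⟩ := exists_nat_one_div_lt (sub_pos.mpr hω)
    refine mem_iUnion.mpr ⟨K, mem_iUnion.mpr ⟨q, ⟨hK.le, ?_⟩⟩⟩
    have : (1 : ℝ)/(q+1) < (Hmid t ω i - (γm t ω i).toReal) - e ω := by exact_mod_cast hq
    have hgoal : e ω ≤ Hmid t ω i - (γm t ω i).toReal - 1/(q+1) := by linarith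
    exact hgoal
  · push_neg at hnull
    obtain ⟨K, q, hpos⟩ := hnull
    exfalso
    set δ : ℝ := 1/(q+1) with hδ
    have hδpos : 0 < δ := by positivity
    set S := A K q with hS
    have hS_measF : MeasurableSet[F t] S := hA_measF K q
    have hS_meas : MeasurableSet S := hF_le t _ hS_measF
    have hγK : ∀ ω ∈ S, (γm t ω i).toReal ≤ (K : ℝ) := by
      intro ω hω
      have := ENNReal.toReal_mono (by simp) hω.1
      simpa using this
    have hγne : ∀ ω ∈ S, γm t ω i ≠ ⊤ := by
      intro ω hω h
      have := hω.1
      rw [h] at this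
      simp at this
    -- the sell-one policy
    set b : ℕ → Ω → Fin n → ℝ := fun s ω j =>
      if s = t ∧ j = i then S.indicator (fun _ => (-1:ℝ)) ω else 0 with hb
    have hgain1 : ∀ ω, eGain m n Hmid HT γp γm b ω
        = S.indicator (fun ω => Hmid t ω i - HT t ω i - min (γm t ω i).toReal K) ω := by
      intro ω
      rw [eGain_single m n Hmid HT γp γm t ht i S (-1) b hb ω]
      by_cases hω : ω ∈ S
      · rw [Set.indicator_of_mem hω, Set.indicator_of_mem hω]
        rw [min_eq_left (hγK ω hω)]
        have h1 : max (-1:ℝ) 0 = 0 := max_eq_right (by norm_num)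
        have h2 : max (-(-1:ℝ)) 0 = 1 := by norm_num
        rw [h1, h2, ENNReal.ofReal_one, ENNReal.ofReal_zero, mul_one, mul_zero,
          ENNReal.toReal_zero, zero_add]
        ring
      · rw [Set.indicator_of_notMem hω, Set.indicator_of_notMem hω]
    obtain ⟨CT, hCT⟩ := hHT_bdd t ht
    obtain ⟨Cm, hCm⟩ := hHmid_bdd t ht
    have hHTi_meas : Measurable (fun ω => HT t ω i) :=
      ((measurable_pi_apply i).comp (hHT_meas t ht)).mono (hF_le m) le_rfl
    have hf_meas : Measurable (fun ω => Hmid t ω i - HT t ω i - min (γm t ω i).toReal K) :=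
      ((hHmidi.mono (hF_le t) le_rfl).sub hHTi_meas).sub
        (((ENNReal.measurable_toReal.comp hγmi).mono (hF_le t) le_rfl).min measurable_const)
    have hf_int : Integrable (fun ω => Hmid t ω i - HT t ω i - min (γm t ω i).toReal K) P := by
      refine integrable_of_aebdd P hf_meas.aestronglyMeasurable
        (C := |Cm| + |CT| + K) ?_
      filter_upwards [hCT, hCm] with ω h1 h2
      have hmin : |min (γm t ω i).toReal (K:ℝ)| ≤ (K:ℝ) := by
        rw [abs_of_nonneg (le_min ENNReal.toReal_nonneg (by positivity))]
        exact min_le_right _ _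
      calc |Hmid t ω i - HT t ω i - min (γm t ω i).toReal K|
          ≤ |Hmid t ω i - HT t ω i| + |min (γm t ω i).toReal (K:ℝ)| := abs_sub _ _
        _ ≤ (|Cm| + |CT|) + K := add_le_add ((abs_sub _ _).trans (add_le_add
            ((h2 i).trans (le_abs_self _)) ((h1 i).trans (le_abs_self _)))) hmin
    have hgain_int : Integrable (eGain m n Hmid HT γp γm b) P := by
      have : eGain m n Hmid HT γp γm b
          = S.indicator (fun ω => Hmid t ω i - HT t ω i - min (γm t ω i).toReal K) :=
        funext hgain1
      rw [this]
      exact hf_int.indicator hS_meas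
    have hadm : EAdmissible P m n F Hmid HT γp γm b := by
      refine ⟨?_, ?_, hgain_int⟩
      · intro s hs
        constructor
        · refine (@measurable_pi_iff Ω (Fin n) (fun _ => ℝ) (F s) (fun _ => inferInstance)
            (b s)).mpr fun j => ?_
          by_cases hj : s = t ∧ j = i
          · have : (fun ω => b s ω j) = S.indicator (fun _ => (-1:ℝ)) := by
              funext ω; simp only [hb]; exact if_pos hj
            rw [this, hj.1]
            exact measurable_const.indicator hS_measF
          · have : (fun ω => b s ω j) = fun _ => 0 := by
              funext ω; simp only [hb]; exact if_neg hj
            rw [this]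
            exact measurable_const
        · refine ⟨1, ae_of_all _ fun ω j => ?_⟩
          simp only [hb]
          by_cases hj : s = t ∧ j = i
          · rw [if_pos hj]
            by_cases hω : ω ∈ S
            · rw [Set.indicator_of_mem hω]; norm_num
            · rw [Set.indicator_of_notMem hω]; norm_num
          · rw [if_neg hj]; norm_num
      · intro s hs
        refine ae_of_all _ fun ω j => ?_
        by_cases hj : s = t ∧ j = i
        · obtain ⟨rfl, rfl⟩ := hj
          have hbv : b s ω j = S.indicator (fun _ => (-1:ℝ)) ω := by
            simp [hb]
          constructor
          · intro _
            rw [hbv]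
            by_cases hω : ω ∈ S
            · rw [Set.indicator_of_mem hω]; norm_num
            · rw [Set.indicator_of_notMem hω]; norm_num
          · intro hγ
            have hω : ω ∉ S := fun hω => hγne ω hω hγ
            rw [hbv, Set.indicator_of_notMem hω]
            norm_num
        · have hbv : b s ω j = 0 := by simp only [hb]; exact if_neg hj
          rw [hbv]
          norm_num
    have hHTi_int : Integrable (fun ω => HT t ω i) P :=
      integrable_of_aebdd P hHTi_meas.aestronglyMeasurable
        (by filter_upwards [hCT] with ω hω using hω i)
    have hrest_meas : Measurable (fun ω => Hmid t ω i - min (γm t ω i).toReal K) :=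
      (hHmidi.mono (hF_le t) le_rfl).sub
        (((ENNReal.measurable_toReal.comp hγmi).mono (hF_le t) le_rfl).min measurable_const)
    have hrest_int : Integrable (fun ω => Hmid t ω i - min (γm t ω i).toReal K) P := by
      refine integrable_of_aebdd P hrest_meas.aestronglyMeasurable (C := |Cm| + K) ?_
      filter_upwards [hCm] with ω h2
      have hmin : |min (γm t ω i).toReal (K:ℝ)| ≤ (K:ℝ) := by
        rw [abs_of_nonneg (le_min ENNReal.toReal_nonneg (by positivity))]
        exact min_le_right _ _
      exact (abs_sub _ _).trans (add_le_add ((h2 i).trans (le_abs_self _)) hmin)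
    have hpos_int : 0 < ∫ ω, eGain m n Hmid HT γp γm b ω ∂P := by
      have h1 : ∫ ω, eGain m n Hmid HT γp γm b ω ∂P
          = ∫ ω in S, ((Hmid t ω i - min (γm t ω i).toReal K) - HT t ω i) ∂P := by
        rw [show (fun ω => eGain m n Hmid HT γp γm b ω)
            = S.indicator (fun ω => Hmid t ω i - HT t ω i - min (γm t ω i).toReal K) from
          funext hgain1, integral_indicator hS_meas]
        congr 1
        funext ω
        ring
      have h2 : ∫ ω in S, ((Hmid t ω i - min (γm t ω i).toReal K) - HT t ω i) ∂P
          = ∫ ω in S, ((Hmid t ω i - min (γm t ω i).toReal K) - e ω) ∂P := by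
        rw [integral_sub hrest_int.integrableOn hHTi_int.integrableOn,
          integral_sub hrest_int.integrableOn integrable_condExp.integrableOn,
          setIntegral_condExp (hF_le t) hHTi_int hS_measF]
      have h3 : δ * (P S).toReal
          ≤ ∫ ω in S, ((Hmid t ω i - min (γm t ω i).toReal K) - e ω) ∂P := by
        refine setIntegral_ge_of_const_le_real hS_meas (measure_ne_top P S) (fun ω hω => ?_)
          (hrest_int.sub integrable_condExp).integrableOn
        have h4 := hω.2
        rw [min_eq_left (hγK ω hω)]
        linarith [h4]
      have h5 : 0 < δ * (P S).toReal :=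
        mul_pos hδpos (ENNReal.toReal_pos (by simpa using hpos) (measure_ne_top P S))
      rw [h1, h2]
      linarith
    linarith [hle b hadm, hpos_int]


theorem stmt_5
    {mΩ : MeasurableSpace Ω} (P : Measure Ω) [IsProbabilityMeasure P]
    (m n : ℕ) (F : ℕ → MeasurableSpace Ω) (hF_mono : Monotone F) (hF_le : ∀ t, F t ≤ mΩ)
    (Hmid HT : ℕ → Ω → Fin n → ℝ)
    (hHmid_meas : ∀ t < m, Measurable[F t] (Hmid t))
    (hHT_meas : ∀ t < m, Measurable[F m] (HT t))
    (hHmid_bdd : ∀ t < m, ∃ C : ℝ, ∀ᵐ ω ∂P, ∀ i, |Hmid t ω i| ≤ C)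
    (hHT_bdd : ∀ t < m, ∃ C : ℝ, ∀ᵐ ω ∂P, ∀ i, |HT t ω i| ≤ C)
    (γp γm : ℕ → Ω → Fin n → ℝ≥0∞)
    (hγp_meas : ∀ t < m, Measurable[F t] (γp t)) (hγm_meas : ∀ t < m, Measurable[F t] (γm t)) :
    (⨆ a : {a : ℕ → Ω → Fin n → ℝ // EAdmissible P m n F Hmid HT γp γm a},
        ((∫ ω, eGain m n Hmid HT γp γm a.1 ω ∂P : ℝ) : EReal)) = 0 ↔
      ∀ t < m, ∀ i : Fin n, ∀ᵐ ω ∂P,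
        (((P[fun ω' => HT t ω' i | F t]) ω : EReal) ≤ (Hmid t ω i : EReal) + (γp t ω i : EReal)) ∧
        ((Hmid t ω i : EReal) - (γm t ω i : EReal) ≤ ((P[fun ω' => HT t ω' i | F t]) ω : EReal)) := by
  have hle_of_sup : ∀ a, EAdmissible P m n F Hmid HT γp γm a →
      ((∫ ω, eGain m n Hmid HT γp γm a ω ∂P : ℝ) : EReal) ≤
        (⨆ a : {a : ℕ → Ω → Fin n → ℝ // EAdmissible P m n F Hmid HT γp γm a},
          ((∫ ω, eGain m n Hmid HT γp γm a.1 ω ∂P : ℝ) : EReal)) := by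
    intro a ha
    exact le_iSup (fun a' : {a' : ℕ → Ω → Fin n → ℝ // EAdmissible P m n F Hmid HT γp γm a'} =>
      ((∫ ω, eGain m n Hmid HT γp γm a'.1 ω ∂P : ℝ) : EReal)) ⟨a, ha⟩
  -- the zero policy
  have hzero_gain : eGain m n Hmid HT γp γm (fun _ _ _ => (0:ℝ)) = fun _ => 0 := by
    funext ω
    simp [eGain]
  have hzero_adm : EAdmissible P m n F Hmid HT γp γm (fun _ _ _ => (0:ℝ)) := by
    refine ⟨fun t ht => ⟨measurable_const, 0, ae_of_all _ fun ω i => by simp⟩,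
      fun t ht => ae_of_all _ fun ω i => by simp, ?_⟩
    rw [hzero_gain]
    exact integrable_const 0
  constructor
  · intro hsup t ht i
    have hle : ∀ a, EAdmissible P m n F Hmid HT γp γm a →
        ∫ ω, eGain m n Hmid HT γp γm a ω ∂P ≤ 0 := by
      intro a ha
      have := hle_of_sup a ha
      rw [hsup] at this
      exact_mod_cast this
    exact (cond1_of_le P m n F hF_le Hmid HT hHmid_meas hHT_meas hHmid_bdd hHT_bdd
        γp γm hγp_meas hle t ht i).and
      (cond2_of_le P m n F hF_le Hmid HT hHmid_meas hHT_meas hHmid_bdd hHT_bdd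
        γp γm hγm_meas hle t ht i)
  · intro hcond
    apply le_antisymm
    · refine iSup_le fun a => ?_
      have := key_le P m n F hF_le Hmid HT hHmid_meas hHT_meas hHmid_bdd hHT_bdd
        γp γm hγp_meas hγm_meas hcond a.1 a.2
      exact_mod_cast this
    · have h0 : ((∫ ω, eGain m n Hmid HT γp γm (fun _ _ _ => (0:ℝ)) ω ∂P : ℝ) : EReal) = 0 := by
        rw [hzero_gain]
        simp
      calc (0 : EReal) = _ := h0.symm
        _ ≤ _ := hle_of_sup _ hzero_adm
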